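/- arXiv:2306.16256 — 3 statements merged into one kernel-verified Lean document; each statement's English description precedes it below -/
import Mathlib

section
/- Let ε be an integrable random vector in ℝⁿ whose components have a continuous joint distribution (so that P(uᵢ+εᵢ = uⱼ+εⱼ) = 0 for i ≠ j and any u). Then Φ(u) = E[max_i (uᵢ+εᵢ)] is differentiable at every u, with partial derivative ∂Φ/∂uᵢ(u) = P(uᵢ+εᵢ ≥ uⱼ+εⱼ for all j). -/
open MeasureTheory Finset Filter Topology

section AuxDet

lemma aux_sup_abs_sub {n : ℕ} (hne : (univ : Finset (Fin n)).Nonempty)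
    (f g : Fin n → ℝ) (c : ℝ) (h : ∀ i, |g i - f i| ≤ c) :
    |univ.sup' hne g - univ.sup' hne f| ≤ c := by
  rw [abs_sub_le_iff]
  constructor
  · rw [sub_le_iff_le_add]
    refine Finset.sup'_le _ _ fun i _ => ?_
    have hi := abs_sub_le_iff.mp (h i)
    have h2 : f i ≤ univ.sup' hne f := Finset.le_sup' f (mem_univ i)
    linarith [hi.1, hi.2]
  · rw [sub_le_iff_le_add]
    refine Finset.sup'_le _ _ fun i _ => ?_
    have hi := abs_sub_le_iff.mp (h i)
    have h2 : g i ≤ univ.sup' hne g := Finset.le_sup' g (mem_univ i)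
    linarith [hi.1, hi.2]

lemma aux_sup_exact {n : ℕ} (hne : (univ : Finset (Fin n)).Nonempty)
    (f v : Fin n → ℝ) (h : ∀ i j, i ≠ j → 2 * ‖v‖ < |f i - f j|) :
    univ.sup' hne (fun i => f i + v i) - univ.sup' hne f
      = ∑ i, (if ∀ j, f j ≤ f i then v i else 0) := by
  obtain ⟨I, -, hI⟩ := Finset.exists_mem_eq_sup' hne f
  have hmax : ∀ j, f j ≤ f I := fun j => hI ▸ Finset.le_sup' f (mem_univ j)
  have hnorm : ∀ j, -‖v‖ ≤ v j ∧ v j ≤ ‖v‖ := by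
    intro j
    exact abs_le.mp ((Real.norm_eq_abs (v j)) ▸ norm_le_pi_norm v j)
  have hgap : ∀ j, j ≠ I → f j + 2 * ‖v‖ < f I := by
    intro j hj
    have h1 := h I j (Ne.symm hj)
    have h2 := hmax j
    rw [abs_of_nonneg (by linarith)] at h1
    linarith
  have hsum : ∑ i, (if ∀ j, f j ≤ f i then v i else 0) = v I := by
    rw [Finset.sum_eq_single I]
    · rw [if_pos hmax]
    · intro i _ hi
      rw [if_neg]
      intro hall
      have h1 := hgap i hi
      have h2 := hall I
      have hv : (0:ℝ) ≤ ‖v‖ := norm_nonneg v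
      linarith
    · exact fun hI' => absurd (mem_univ I) hI'
  rw [hsum, sub_eq_iff_eq_add, hI]
  apply le_antisymm
  · refine Finset.sup'_le _ _ fun j _ => ?_
    rcases eq_or_ne j I with rfl | hj
    · linarith
    · have h1 := hgap j hj
      have h2 := hnorm j
      have h3 := hnorm I
      linarith [h2.2, h3.1]
  · have := Finset.le_sup' (fun i => f i + v i) (mem_univ I)
    linarith

lemma aux_sup_abs_le_sum {n : ℕ} (hne : (univ : Finset (Fin n)).Nonempty)
    (f : Fin n → ℝ) : |univ.sup' hne f| ≤ ∑ i, |f i| := by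
  obtain ⟨I, -, hI⟩ := Finset.exists_mem_eq_sup' hne f
  rw [hI]
  exact Finset.single_le_sum (f := fun i => |f i|) (fun i _ => abs_nonneg _) (mem_univ I)

end AuxDet

section AuxMeas

variable {Ω : Type*} [MeasurableSpace Ω]

/-- The event that coordinate `i` achieves the max. -/
def mA (n : ℕ) (ε : Ω → Fin n → ℝ) (u : Fin n → ℝ) (i : Fin n) : Set Ω :=
  {ω | ∀ j, u j + ε ω j ≤ u i + ε ω i}

/-- The event that the pair `q` is within `δ` of a tie. -/
def mB (n : ℕ) (ε : Ω → Fin n → ℝ) (u : Fin n → ℝ) (q : Fin n × Fin n) (δ : ℝ) : Set Ω :=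
  {ω | |(u q.1 + ε ω q.1) - (u q.2 + ε ω q.2)| ≤ δ}

/-- The event that some distinct pair is within `δ` of a tie. -/
def mS (n : ℕ) (ε : Ω → Fin n → ℝ) (u : Fin n → ℝ) (δ : ℝ) : Set Ω :=
  ⋃ q ∈ (univ : Finset (Fin n)).offDiag, mB n ε u q δ

/-- The random max. -/
def mF (n : ℕ) (hn : 0 < n) (ε : Ω → Fin n → ℝ) (w : Fin n → ℝ) (ω : Ω) : ℝ :=
  univ.sup' (Finset.univ_nonempty_iff.mpr (Fin.pos_iff_nonempty.mp hn))
    (fun i => w i + ε ω i)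

/-- The candidate linearization integrand. -/
noncomputable def mg (n : ℕ) (ε : Ω → Fin n → ℝ) (u : Fin n → ℝ) (v : Fin n → ℝ) (ω : Ω) : ℝ :=
  ∑ i, (mA n ε u i).indicator (fun _ => v i) ω

variable {n : ℕ} {ε : Ω → Fin n → ℝ} {u : Fin n → ℝ}

lemma mA_meas (hmeas : ∀ i, Measurable (fun ω => ε ω i)) (i : Fin n) :
    MeasurableSet (mA n ε u i) := by
  have : mA n ε u i = ⋂ j, {ω | u j + ε ω j ≤ u i + ε ω i} := by
    ext ω; simp [mA, Set.mem_iInter]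
  rw [this]
  exact MeasurableSet.iInter fun j =>
    measurableSet_le ((hmeas j).const_add (u j)) ((hmeas i).const_add (u i))

lemma mB_meas (hmeas : ∀ i, Measurable (fun ω => ε ω i)) (q : Fin n × Fin n) (δ : ℝ) :
    MeasurableSet (mB n ε u q δ) :=
  measurableSet_le
    (Measurable.abs (((hmeas q.1).const_add (u q.1)).sub ((hmeas q.2).const_add (u q.2))))
    measurable_const

lemma mS_meas (hmeas : ∀ i, Measurable (fun ω => ε ω i)) (δ : ℝ) :
    MeasurableSet (mS n ε u δ) :=
  Finset.measurableSet_biUnion _ fun q _ => mB_meas hmeas q δ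

lemma mF_meas (hn : 0 < n) (hmeas : ∀ i, Measurable (fun ω => ε ω i)) (w : Fin n → ℝ) :
    Measurable (mF n hn ε w) := by
  have := Finset.measurable_sup' (Finset.univ_nonempty_iff.mpr (Fin.pos_iff_nonempty.mp hn))
    (f := fun i (ω : Ω) => w i + ε ω i) (fun i _ => (hmeas i).const_add (w i))
  convert this using 1
  funext ω
  rw [Finset.sup'_apply]
  rfl

lemma mF_int (hn : 0 < n) (P : Measure Ω) [IsProbabilityMeasure P]
    (hmeas : ∀ i, Measurable (fun ω => ε ω i))
    (hint : ∀ i, Integrable (fun ω => ε ω i) P) (w : Fin n → ℝ) :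
    Integrable (mF n hn ε w) P := by
  refine Integrable.mono' (g := fun ω => ∑ i, |w i + ε ω i|)
    (integrable_finset_sum _ fun i _ => (((integrable_const (w i)).add (hint i)).abs))
    (mF_meas hn hmeas w).aestronglyMeasurable ?_
  filter_upwards with ω
  rw [Real.norm_eq_abs]
  exact aux_sup_abs_le_sum _ _

lemma mg_int (P : Measure Ω) [IsProbabilityMeasure P]
    (hmeas : ∀ i, Measurable (fun ω => ε ω i)) (v : Fin n → ℝ) :
    Integrable (mg n ε u v) P :=
  integrable_finset_sum _ fun i _ => (integrable_const (v i)).indicator (mA_meas hmeas i)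

lemma mg_integral (P : Measure Ω) [IsProbabilityMeasure P]
    (hmeas : ∀ i, Measurable (fun ω => ε ω i)) (v : Fin n → ℝ) :
    ∫ ω, mg n ε u v ω ∂P = ∑ i, (P (mA n ε u i)).toReal * v i := by
  unfold mg
  rw [integral_finset_sum _ fun i _ => (integrable_const (v i)).indicator (mA_meas hmeas i)]
  refine Finset.sum_congr rfl fun i _ => ?_
  rw [integral_indicator_const (v i) (mA_meas hmeas i), smul_eq_mul, measureReal_def]

lemma key_pt (hn : 0 < n) (h : Fin n → ℝ) (δ : ℝ) (hδ : 2 * ‖h‖ ≤ δ) (ω : Ω) :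
    |mF n hn ε (u + h) ω - mF n hn ε u ω - mg n ε u h ω|
      ≤ (mS n ε u δ).indicator (fun _ => ((n:ℝ) + 1) * ‖h‖) ω := by
  classical
  have hne : (univ : Finset (Fin n)).Nonempty :=
    Finset.univ_nonempty_iff.mpr (Fin.pos_iff_nonempty.mp hn)
  have hnn : (0:ℝ) ≤ ‖h‖ := norm_nonneg h
  have hco : ∀ j, |h j| ≤ ‖h‖ := fun j => (Real.norm_eq_abs (h j)) ▸ norm_le_pi_norm h j
  have eF : mF n hn ε (u + h) ω = univ.sup' hne (fun i => (u i + ε ω i) + h i) := by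
    unfold mF
    congr 1
    funext i
    simp only [Pi.add_apply]
    ring
  by_cases hω : ω ∈ mS n ε u δ
  · rw [Set.indicator_of_mem hω]
    have b1 : |mF n hn ε (u + h) ω - mF n hn ε u ω| ≤ ‖h‖ := by
      rw [eF]
      refine aux_sup_abs_sub hne (fun i => u i + ε ω i) _ ‖h‖ fun i => ?_
      have : (u i + ε ω i + h i) - (u i + ε ω i) = h i := by ring
      rw [this]
      exact hco i
    have b2 : |mg n ε u h ω| ≤ (n:ℝ) * ‖h‖ := by
      unfold mg
      calc |∑ i, (mA n ε u i).indicator (fun _ => h i) ω|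
          ≤ ∑ i, |(mA n ε u i).indicator (fun _ => h i) ω| :=
            Finset.abs_sum_le_sum_abs _ _
        _ ≤ ∑ _i : Fin n, ‖h‖ := by
            refine Finset.sum_le_sum fun i _ => ?_
            rw [Set.indicator_apply]
            split_ifs
            · exact hco i
            · simpa using hnn
        _ = (n:ℝ) * ‖h‖ := by
            rw [Finset.sum_const, card_univ, Fintype.card_fin, nsmul_eq_mul]
    have tri := abs_add_le (mF n hn ε (u + h) ω - mF n hn ε u ω) (-(mg n ε u h ω))
    rw [abs_neg] at tri
    rw [sub_eq_add_neg (mF n hn ε (u + h) ω - mF n hn ε u ω)]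
    nlinarith [abs_nonneg (mF n hn ε (u + h) ω - mF n hn ε u ω)]
  · rw [Set.indicator_of_notMem hω]
    have hsep : ∀ i j, i ≠ j →
        2 * ‖h‖ < |(fun i => u i + ε ω i) i - (fun i => u i + ε ω i) j| := by
      intro i j hij
      have hB : ω ∉ mB n ε u (i, j) δ := by
        intro hB
        exact hω (Set.mem_biUnion (Finset.mem_offDiag.mpr ⟨mem_univ i, mem_univ j, hij⟩) hB)
      have : ¬ |(u i + ε ω i) - (u j + ε ω j)| ≤ δ := hB
      push_neg at this
      calc 2 * ‖h‖ ≤ δ := hδ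
        _ < _ := this
    have e := aux_sup_exact hne (fun i => u i + ε ω i) h hsep
    have eg : mg n ε u h ω
        = ∑ i, (if ∀ j, (u j + ε ω j) ≤ (u i + ε ω i) then h i else 0) := by
      unfold mg mA
      refine Finset.sum_congr rfl fun i _ => ?_
      rw [Set.indicator_apply]
      congr 1
    have : mF n hn ε (u + h) ω - mF n hn ε u ω = mg n ε u h ω := by
      rw [eF, eg]
      exact e
    rw [this, sub_self, abs_zero]

lemma mB_tendsto (P : Measure Ω) [IsProbabilityMeasure P]
    (hmeas : ∀ i, Measurable (fun ω => ε ω i)) (q : Fin n × Fin n)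
    (h0 : P {ω | u q.1 + ε ω q.1 = u q.2 + ε ω q.2} = 0) :
    Tendsto (fun k : ℕ => P (mB n ε u q (1 / ((k:ℝ) + 1)))) atTop (𝓝 0) := by
  have hanti : Antitone (fun k : ℕ => mB n ε u q (1 / ((k:ℝ) + 1))) := by
    intro k m hkm ω hω
    have h1 : (1:ℝ) / ((m:ℝ) + 1) ≤ 1 / ((k:ℝ) + 1) := by
      apply one_div_le_one_div_of_le
      · positivity
      · exact_mod_cast Nat.succ_le_succ hkm
    exact le_trans hω h1
  have hinter : (⋂ k : ℕ, mB n ε u q (1 / ((k:ℝ) + 1)))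
      = {ω | u q.1 + ε ω q.1 = u q.2 + ε ω q.2} := by
    ext ω
    simp only [Set.mem_iInter, mB, Set.mem_setOf_eq]
    constructor
    · intro hall
      by_contra hne'
      have hpos : 0 < |(u q.1 + ε ω q.1) - (u q.2 + ε ω q.2)| :=
        abs_pos.mpr (sub_ne_zero.mpr hne')
      obtain ⟨k, hk⟩ := exists_nat_one_div_lt hpos
      exact absurd (hall k) (not_le.mpr hk)
    · intro heq k
      rw [heq, sub_self, abs_zero]
      positivity
  have := MeasureTheory.tendsto_measure_iInter_atTop
    (μ := P) (s := fun k : ℕ => mB n ε u q (1 / ((k:ℝ) + 1)))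
    (fun k => (mB_meas hmeas q _).nullMeasurableSet) hanti ⟨0, measure_ne_top P _⟩
  rw [hinter, h0] at this
  exact this

end AuxMeas

theorem stmt_3 (n : ℕ) (hn : 0 < n)
    {Ω : Type*} [MeasurableSpace Ω] (P : Measure Ω) [IsProbabilityMeasure P]
    (ε : Ω → Fin n → ℝ)
    (hmeas : ∀ i, Measurable (fun ω => ε ω i))
    (hint : ∀ i, Integrable (fun ω => ε ω i) P)
    (hcont : ∀ (u : Fin n → ℝ) (i j : Fin n), i ≠ j →
      P {ω | u i + ε ω i = u j + ε ω j} = 0)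
    (Φ : (Fin n → ℝ) → ℝ)
    (hΦ : ∀ u, Φ u = ∫ ω, Finset.univ.sup'
      (Finset.univ_nonempty_iff.mpr (Fin.pos_iff_nonempty.mp hn))
      (fun i => u i + ε ω i) ∂P)
    (u : Fin n → ℝ) :
    ∃ L : (Fin n → ℝ) →L[ℝ] ℝ, HasFDerivAt Φ L u ∧
      ∀ i, L (Pi.single i 1) =
        (P {ω | ∀ j, u j + ε ω j ≤ u i + ε ω i}).toReal := by
  classical
  set L : (Fin n → ℝ) →L[ℝ] ℝ :=
    ∑ i, (P (mA n ε u i)).toReal • ContinuousLinearMap.proj i with hLdef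
  have hLapp : ∀ v, L v = ∑ i, (P (mA n ε u i)).toReal * v i := by
    intro v
    rw [hLdef]
    simp [ContinuousLinearMap.sum_apply, ContinuousLinearMap.smul_apply,
      ContinuousLinearMap.proj_apply, smul_eq_mul]
  have hΦ' : ∀ w, Φ w = ∫ ω, mF n hn ε w ω ∂P := fun w => hΦ w
  refine ⟨L, ?_, ?_⟩
  · rw [hasFDerivAt_iff_isLittleO_nhds_zero, Asymptotics.isLittleO_iff]
    intro c hc
    have hc' : (0:ℝ) < c / ((n:ℝ) + 1) := by positivity
    have hts : Tendsto (fun k : ℕ => ∑ q ∈ (univ : Finset (Fin n)).offDiag,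
        P (mB n ε u q (1 / ((k:ℝ) + 1)))) atTop (𝓝 0) := by
      have h0 : (0 : ENNReal) = ∑ q ∈ (univ : Finset (Fin n)).offDiag, 0 := by simp
      rw [h0]
      exact tendsto_finset_sum _ fun q hq =>
        mB_tendsto P hmeas q (hcont u q.1 q.2 (Finset.mem_offDiag.mp hq).2.2)
    have hev := hts.eventually_lt_const (ENNReal.ofReal_pos.mpr hc')
    obtain ⟨k, hk⟩ := hev.exists
    set δ : ℝ := 1 / ((k:ℝ) + 1) with hδdef
    have hδpos : 0 < δ := by positivity
    have hPS : (P (mS n ε u δ)).toReal ≤ c / ((n:ℝ) + 1) := by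
      refine ENNReal.toReal_le_of_le_ofReal hc'.le ?_
      exact le_trans (measure_biUnion_finset_le (μ := P) _ _) hk.le
    filter_upwards [Metric.ball_mem_nhds (0 : Fin n → ℝ) (half_pos hδpos)] with h hh
    rw [mem_ball_zero_iff] at hh
    have hδh : 2 * ‖h‖ ≤ δ := by linarith
    have hFsub : Integrable (fun ω => mF n hn ε (u + h) ω - mF n hn ε u ω) P :=
      (mF_int hn P hmeas hint _).sub (mF_int hn P hmeas hint _)
    have hkey : Φ (u + h) - Φ u - L h
        = ∫ ω, (mF n hn ε (u + h) ω - mF n hn ε u ω - mg n ε u h ω) ∂P := by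
      rw [integral_sub hFsub (mg_int P hmeas h),
        integral_sub (mF_int hn P hmeas hint _) (mF_int hn P hmeas hint _),
        hΦ' (u + h), hΦ' u, hLapp h, ← mg_integral P hmeas h]
    rw [hkey]
    calc ‖∫ ω, (mF n hn ε (u + h) ω - mF n hn ε u ω - mg n ε u h ω) ∂P‖
        ≤ ∫ ω, ‖mF n hn ε (u + h) ω - mF n hn ε u ω - mg n ε u h ω‖ ∂P :=
          norm_integral_le_integral_norm _
      _ ≤ ∫ ω, (mS n ε u δ).indicator (fun _ => ((n:ℝ) + 1) * ‖h‖) ω ∂P := by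
          refine integral_mono
            (((( mF_int hn P hmeas hint _).sub (mF_int hn P hmeas hint _)).sub
              (mg_int P hmeas h)).norm)
            ((integrable_const _).indicator (mS_meas hmeas δ)) ?_
          intro ω
          dsimp only
          rw [Real.norm_eq_abs]
          exact key_pt hn h δ hδh ω
      _ = (P (mS n ε u δ)).toReal • (((n:ℝ) + 1) * ‖h‖) :=
          integral_indicator_const _ (mS_meas hmeas δ)
      _ ≤ c * ‖h‖ := by
          rw [smul_eq_mul]
          calc (P (mS n ε u δ)).toReal * (((n:ℝ) + 1) * ‖h‖)
              ≤ (c / ((n:ℝ) + 1)) * (((n:ℝ) + 1) * ‖h‖) :=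
                mul_le_mul_of_nonneg_right hPS (by positivity)
            _ = c * ‖h‖ := by
                have hne0 : ((n:ℝ) + 1) ≠ 0 := by positivity
                field_simp
  · intro i
    rw [hLapp]
    rw [Finset.sum_eq_single i]
    · rw [Pi.single_eq_same, mul_one]
      rfl
    · intro j _ hj
      rw [Pi.single_eq_of_ne hj, mul_zero]
    · intro hi
      exact absurd (mem_univ i) hi
end

section
/- A convex function f : ℝⁿ → ℝ that is Gateaux differentiable everywhere (all partial derivatives exist at every point and f is differentiable at every point) is continuously differentiable (of class C¹). -/
open Filter Metric Set Topology

variable {n : ℕ} {f : (Fin n → ℝ) → ℝ}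

/-- Derivative of `f` along the segment from `z` to `y`. -/
lemma line_hasDerivAt (hdiff : Differentiable ℝ f) (z v : Fin n → ℝ) (t₀ : ℝ) :
    HasDerivAt (fun t : ℝ => f (z + t • v)) (fderiv ℝ f (z + t₀ • v) v) t₀ := by
  have h1 : HasDerivAt (fun t : ℝ => z + t • v) v t₀ := by
    simpa using ((hasDerivAt_id t₀).smul_const v).const_add z
  exact ((hdiff (z + t₀ • v)).hasFDerivAt.comp_hasDerivAt t₀ h1)

/-- Subgradient inequality. -/
lemma subgrad (hconv : ConvexOn ℝ Set.univ f) (hdiff : Differentiable ℝ f)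
    (z y : Fin n → ℝ) : f z + fderiv ℝ f z (y - z) ≤ f y := by
  set v := y - z with hv
  have hg : ConvexOn ℝ Set.univ (fun t : ℝ => f (z + t • v)) := by
    have := hconv.comp_affineMap (AffineMap.lineMap z y)
    simp only [Set.preimage_univ] at this
    convert this using 2 with t
    case e'_12 =>
      simp [AffineMap.lineMap_apply, hv]
      abel_nf
    all_goals rfl
  have hd := line_hasDerivAt hdiff z v 0
  rw [zero_smul, add_zero] at hd
  have := hg.le_slope_of_hasDerivAt (Set.mem_univ (0:ℝ)) (Set.mem_univ (1:ℝ)) one_pos hd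
  rw [slope_def_field] at this
  simp only [one_smul, zero_smul, add_zero] at this
  have hzy : z + v = y := by simp [hv]
  rw [hzy] at this
  have : fderiv ℝ f z v ≤ (f y - f z) / (1 - 0) := this
  linarith [this, (by norm_num : (1:ℝ) - 0 = 1) ▸ this]

/-- Uniqueness of the subgradient at a point of differentiability. -/
lemma subgrad_uniq (hdiff : Differentiable ℝ f) (z : Fin n → ℝ)
    (L : (Fin n → ℝ) →L[ℝ] ℝ) (h : ∀ y, f z + L (y - z) ≤ f y) :
    L = fderiv ℝ f z := by
  ext1 v
  have key : ∀ v : Fin n → ℝ, L v ≤ fderiv ℝ f z v := by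
    intro v
    have hd := line_hasDerivAt hdiff z v 0
    rw [zero_smul, add_zero] at hd
    have hslope := hasDerivAt_iff_tendsto_slope.mp hd
    have hsub : Set.Ioi (0:ℝ) ⊆ {(0:ℝ)}ᶜ := fun t ht => by
      simpa using (ne_of_gt ht)
    have htend := hslope.mono_left (nhdsWithin_mono _ hsub)
    refine ge_of_tendsto htend ?_
    filter_upwards [self_mem_nhdsWithin] with t (ht : 0 < t)
    have h2 : t * L v ≤ f (z + t • v) - f z := by
      have he : L ((z + t • v) - z) = t * L v := by simp
      have := h (z + t • v)
      linarith [he ▸ this]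
    rw [slope_def_field, sub_zero, le_div_iff₀ ht]
    simp only [zero_smul, add_zero]
    linarith [mul_comm (L v) t]
  have h1 := key v
  have h2 := key (-v)
  simp only [map_neg] at h2
  linarith

theorem stmt_5 (n : ℕ) (f : (Fin n → ℝ) → ℝ)
    (hconv : ConvexOn ℝ Set.univ f)
    (hdiff : Differentiable ℝ f) :
    ContDiff ℝ 1 f := by
  rw [contDiff_one_iff_fderiv]
  refine ⟨hdiff, ?_⟩
  rw [continuous_iff_continuousAt]
  intro x
  have hll : LocallyLipschitzOn Set.univ f :=
    (hconv.locallyLipschitzOn_iff_continuousOn isOpen_univ).mpr hdiff.continuous.continuousOn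
  obtain ⟨K, t, ht, hlip⟩ := hll (Set.mem_univ x)
  rw [nhdsWithin_univ] at ht
  have hbound : ∀ z ∈ interior t, ‖fderiv ℝ f z‖ ≤ K := fun z hz =>
    norm_fderiv_le_of_lipschitzOn ℝ (mem_interior_iff_mem_nhds.mp hz) hlip
  have hint : interior t ∈ 𝓝 x := interior_mem_nhds.mpr ht
  unfold ContinuousAt
  rw [tendsto_iff_seq_tendsto]
  intro u hu
  apply tendsto_of_subseq_tendsto
  intro ns hns
  have hus : Tendsto (fun k => u (ns k)) atTop (𝓝 x) := hu.comp hns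
  have hev : ∀ᶠ k in atTop, u (ns k) ∈ interior t := hus hint
  obtain ⟨N, hN⟩ := eventually_atTop.mp hev
  set w : ℕ → ((Fin n → ℝ) →L[ℝ] ℝ) := fun k => fderiv ℝ f (u (ns (k + N))) with hw_def
  have hball : ∀ k, w k ∈ closedBall (0 : (Fin n → ℝ) →L[ℝ] ℝ) K := by
    intro k
    rw [mem_closedBall_zero_iff]
    exact hbound _ (hN (k + N) (Nat.le_add_left N k))
  obtain ⟨a, _, φ, hφ, hwa⟩ := tendsto_subseq_of_bounded isBounded_closedBall hball
  set ms : ℕ → ℕ := fun k => φ k + N with hms_def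
  have hms : Tendsto ms atTop atTop :=
    tendsto_atTop_mono (fun k => (hφ.id_le k).trans (Nat.le_add_right _ N)) tendsto_id
  set z : ℕ → (Fin n → ℝ) := fun k => u (ns (ms k)) with hz_def
  have hz : Tendsto z atTop (𝓝 x) := hus.comp hms
  have hw : Tendsto (fun k => fderiv ℝ f (z k)) atTop (𝓝 a) := hwa
  have hsub : ∀ y, f x + a (y - x) ≤ f y := by
    intro y
    have hk : ∀ k, f (z k) + (fderiv ℝ f (z k)) (y - z k) ≤ f y := fun k =>
      subgrad hconv hdiff _ y
    have hlim : Tendsto (fun k => f (z k) + (fderiv ℝ f (z k)) (y - z k)) atTop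
        (𝓝 (f x + a (y - x))) := by
      apply Tendsto.add
      · exact (hdiff.continuous.tendsto x).comp hz
      · have h1 : Tendsto (fun k => ((fderiv ℝ f (z k)), y - z k)) atTop (𝓝 (a, y - x)) :=
          hw.prodMk_nhds (tendsto_const_nhds.sub hz)
        exact (isBoundedBilinearMap_apply.continuous.tendsto (a, y - x)).comp h1
    exact le_of_tendsto hlim (Filter.Eventually.of_forall hk)
  have ha : a = fderiv ℝ f x := subgrad_uniq hdiff x a hsub
  exact ⟨ms, ha ▸ hw⟩
end

section
/- For the M/M/s waiting time function w(x) = (1/μ)·Q_s(x/μ) with Q_s(z) = [Σ_{k=0}^{s-1} z^k/k! + (z^s/s!)·s/(s-z)]^{-1} · (z^s/s!)·s/(s-z)², the function x ↦ w(x) is continuous and strictly increasing on [0, sμ), and w(x) → ∞ as x → sμ⁻. -/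
open Set Filter Finset

noncomputable def myQ (s : ℕ) : ℝ → ℝ := fun z =>
  ((∑ k ∈ Finset.range s, z ^ k / (Nat.factorial k : ℝ)) +
      z ^ s / (Nat.factorial s : ℝ) * ((s : ℝ) / ((s : ℝ) - z)))⁻¹ *
    (z ^ s / (Nat.factorial s : ℝ) * ((s : ℝ) / ((s : ℝ) - z) ^ 2))

noncomputable def myF (s : ℕ) : ℝ → ℝ := fun z =>
  ((s : ℝ) - z) + ((Nat.factorial s : ℝ) / s) *
    ∑ k ∈ Finset.range s, ((s : ℝ) - z) ^ 2 * z ^ k / ((Nat.factorial k : ℝ) * z ^ s)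

lemma myQ_eq_inv_myF (s : ℕ) (hs : 1 ≤ s) {z : ℝ} (hz0 : 0 < z) (hzs : z < s) :
    myQ s z = (myF s z)⁻¹ := by
  have hsz : (0:ℝ) < (s:ℝ) - z := by linarith
  have hsz' : (s:ℝ) - z ≠ 0 := ne_of_gt hsz
  have hz' : z ≠ 0 := ne_of_gt hz0
  have hfs : (Nat.factorial s : ℝ) ≠ 0 := Nat.cast_ne_zero.mpr (Nat.factorial_ne_zero s)
  have hsn : (s:ℝ) ≠ 0 := by positivity
  set N : ℝ := z ^ s / (Nat.factorial s : ℝ) * ((s : ℝ) / ((s : ℝ) - z) ^ 2) with hN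
  have hNne : N ≠ 0 := by
    rw [hN]; positivity
  have key : myF s z * N =
      (∑ k ∈ Finset.range s, z ^ k / (Nat.factorial k : ℝ)) +
        z ^ s / (Nat.factorial s : ℝ) * ((s : ℝ) / ((s : ℝ) - z)) := by
    rw [myF, hN]
    rw [add_mul, mul_assoc, Finset.sum_mul]
    have h1 : ∀ k ∈ Finset.range s,
        ((s : ℝ) - z) ^ 2 * z ^ k / ((Nat.factorial k : ℝ) * z ^ s) *
          (z ^ s / (Nat.factorial s : ℝ) * ((s : ℝ) / ((s : ℝ) - z) ^ 2)) =
        z ^ k / (Nat.factorial k : ℝ) * ((s:ℝ) / (Nat.factorial s : ℝ)) := by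
      intro k _
      have hfk : (Nat.factorial k : ℝ) ≠ 0 := Nat.cast_ne_zero.mpr (Nat.factorial_ne_zero k)
      have hzs0 : z ^ s ≠ 0 := pow_ne_zero _ hz'
      field_simp
    rw [Finset.sum_congr rfl h1, ← Finset.sum_mul]
    set A := ∑ k ∈ Finset.range s, z ^ k / (Nat.factorial k : ℝ) with hA
    field_simp
    ring
  rw [myQ, ← key, mul_inv, mul_assoc, inv_mul_cancel₀ hNne, mul_one]

lemma myF_pos (s : ℕ) {z : ℝ} (hz0 : 0 < z) (hzs : z < s) : 0 < myF s z := by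
  have hsz : (0:ℝ) < (s:ℝ) - z := by linarith
  have hs0 : (0:ℝ) < s := lt_trans hz0 hzs
  rw [myF]
  have : 0 ≤ ((Nat.factorial s : ℝ) / s) *
      ∑ k ∈ Finset.range s, ((s : ℝ) - z) ^ 2 * z ^ k / ((Nat.factorial k : ℝ) * z ^ s) := by
    apply mul_nonneg (by positivity)
    apply Finset.sum_nonneg
    intro k _
    positivity
  linarith

lemma myF_anti (s : ℕ) (hs : 1 ≤ s) {z₁ z₂ : ℝ} (h0 : 0 < z₁) (h12 : z₁ < z₂)
    (h2s : z₂ < s) : myF s z₂ < myF s z₁ := by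
  have hs0 : (0:ℝ) < s := by exact_mod_cast lt_of_lt_of_le zero_lt_one (by exact_mod_cast hs)
  have hsz1 : (0:ℝ) < (s:ℝ) - z₁ := by linarith
  have hsz2 : (0:ℝ) < (s:ℝ) - z₂ := by linarith
  have hz2 : 0 < z₂ := lt_trans h0 h12
  have hsum : ∑ k ∈ Finset.range s, ((s : ℝ) - z₂) ^ 2 * z₂ ^ k / ((Nat.factorial k : ℝ) * z₂ ^ s)
      < ∑ k ∈ Finset.range s, ((s : ℝ) - z₁) ^ 2 * z₁ ^ k / ((Nat.factorial k : ℝ) * z₁ ^ s) := by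
    apply Finset.sum_lt_sum_of_nonempty
    · exact Finset.nonempty_range_iff.mpr (by omega)
    intro k hk
    have hk' : k < s := Finset.mem_range.mp hk
    have hfk : (0:ℝ) < (Nat.factorial k : ℝ) := by exact_mod_cast Nat.factorial_pos k
    rw [div_lt_div_iff₀ (by positivity) (by positivity)]
    have hms : k + (s - k) = s := by omega
    have e1 : z₁ ^ s = z₁ ^ k * z₁ ^ (s - k) := by rw [← pow_add, hms]
    have e2 : z₂ ^ s = z₂ ^ k * z₂ ^ (s - k) := by rw [← pow_add, hms]
    rw [e1, e2]
    have hcore : ((s:ℝ) - z₂) ^ 2 * z₁ ^ (s - k) < ((s:ℝ) - z₁) ^ 2 * z₂ ^ (s - k) := by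
      apply mul_lt_mul'' _ _ (by positivity) (by positivity)
      · exact pow_lt_pow_left₀ (by linarith) hsz2.le (by norm_num)
      · exact pow_lt_pow_left₀ h12 h0.le (by omega)
    calc ((s:ℝ) - z₂) ^ 2 * z₂ ^ k * ((Nat.factorial k : ℝ) * (z₁ ^ k * z₁ ^ (s-k)))
        = ((Nat.factorial k : ℝ) * (z₁ ^ k * z₂ ^ k)) * (((s:ℝ) - z₂) ^ 2 * z₁ ^ (s-k)) := by ring
      _ < ((Nat.factorial k : ℝ) * (z₁ ^ k * z₂ ^ k)) * (((s:ℝ) - z₁) ^ 2 * z₂ ^ (s-k)) := by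
          apply mul_lt_mul_of_pos_left hcore (by positivity)
      _ = ((s:ℝ) - z₁) ^ 2 * z₁ ^ k * ((Nat.factorial k : ℝ) * (z₂ ^ k * z₂ ^ (s-k))) := by ring
  rw [myF, myF]
  have hc : (0:ℝ) < (Nat.factorial s : ℝ) / s := by
    have := Nat.factorial_pos s
    positivity
  have := mul_lt_mul_of_pos_left hsum hc
  linarith

lemma myD_ge_one (s : ℕ) (hs : 1 ≤ s) {z : ℝ} (hz0 : 0 ≤ z) (hzs : z < s) :
    1 ≤ (∑ k ∈ Finset.range s, z ^ k / (Nat.factorial k : ℝ)) +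
      z ^ s / (Nat.factorial s : ℝ) * ((s : ℝ) / ((s : ℝ) - z)) := by
  have hsz : (0:ℝ) < (s:ℝ) - z := by linarith
  have hA : 1 ≤ ∑ k ∈ Finset.range s, z ^ k / (Nat.factorial k : ℝ) := by
    have h0 : (0:ℕ) ∈ Finset.range s := Finset.mem_range.mpr (by omega)
    calc (1:ℝ) = z ^ 0 / (Nat.factorial 0 : ℝ) := by norm_num
      _ ≤ _ := Finset.single_le_sum (f := fun k => z ^ k / (Nat.factorial k : ℝ))
          (fun k _ => by have := Nat.factorial_pos k; positivity) h0
  have hB : 0 ≤ z ^ s / (Nat.factorial s : ℝ) * ((s : ℝ) / ((s : ℝ) - z)) := by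
    have := Nat.factorial_pos s
    have hs0 : (0:ℝ) ≤ s := by positivity
    positivity
  linarith

lemma myQ_zero (s : ℕ) (hs : 1 ≤ s) : myQ s 0 = 0 := by
  rw [myQ]
  have : (0:ℝ) ^ s = 0 := zero_pow (by omega)
  simp [this]

lemma myQ_pos (s : ℕ) (hs : 1 ≤ s) {z : ℝ} (hz0 : 0 < z) (hzs : z < s) : 0 < myQ s z := by
  rw [myQ_eq_inv_myF s hs hz0 hzs]
  exact inv_pos.mpr (myF_pos s hz0 hzs)

lemma myQ_mono (s : ℕ) (hs : 1 ≤ s) : StrictMonoOn (myQ s) (Set.Ico 0 ((s:ℝ))) := by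
  rintro z₁ ⟨h1a, h1b⟩ z₂ ⟨h2a, h2b⟩ h12
  rcases eq_or_lt_of_le h1a with h | h
  · rw [← h, myQ_zero s hs]
    exact myQ_pos s hs (h ▸ h12) h2b
  · rw [myQ_eq_inv_myF s hs h h1b, myQ_eq_inv_myF s hs (lt_trans h h12) h2b]
    exact inv_strictAnti₀ (myF_pos s (lt_trans h h12) h2b) (myF_anti s hs h h12 h2b)

lemma myQ_cont (s : ℕ) (hs : 1 ≤ s) : ContinuousOn (myQ s) (Set.Ico 0 ((s:ℝ))) := by
  have hne : ∀ z ∈ Set.Ico (0:ℝ) ((s:ℝ)), (s:ℝ) - z ≠ 0 := fun z hz => by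
    have := hz.2; intro h; linarith
  have hA : ContinuousOn (fun z : ℝ => ∑ k ∈ Finset.range s, z ^ k / (Nat.factorial k : ℝ))
      (Set.Ico 0 ((s:ℝ))) := by
    apply continuousOn_finset_sum
    intro k _
    exact ((continuousOn_pow k).div_const _)
  have hB : ContinuousOn (fun z : ℝ => z ^ s / (Nat.factorial s : ℝ) * ((s : ℝ) / ((s : ℝ) - z)))
      (Set.Ico 0 ((s:ℝ))) := by
    apply ContinuousOn.mul ((continuousOn_pow s).div_const _)
    exact ContinuousOn.div continuousOn_const (continuousOn_const.sub continuousOn_id) hne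
  have hD : ContinuousOn (fun z : ℝ =>
      ((∑ k ∈ Finset.range s, z ^ k / (Nat.factorial k : ℝ)) +
        z ^ s / (Nat.factorial s : ℝ) * ((s : ℝ) / ((s : ℝ) - z)))⁻¹) (Set.Ico 0 ((s:ℝ))) := by
    apply ContinuousOn.inv₀ (hA.add hB)
    intro z hz
    have := myD_ge_one s hs hz.1 hz.2
    simp only [Pi.add_apply]
    linarith
  have hN : ContinuousOn (fun z : ℝ => z ^ s / (Nat.factorial s : ℝ) * ((s : ℝ) / ((s : ℝ) - z) ^ 2))
      (Set.Ico 0 ((s:ℝ))) := by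
    apply ContinuousOn.mul ((continuousOn_pow s).div_const _)
    exact ContinuousOn.div continuousOn_const
      (((continuousOn_const.sub continuousOn_id)).pow 2)
      (fun z hz => pow_ne_zero _ (hne z hz))
  exact hD.mul hN

lemma myQ_tendsto (s : ℕ) (hs : 1 ≤ s) :
    Tendsto (myQ s) (nhdsWithin ((s:ℝ)) (Set.Iio ((s:ℝ)))) atTop := by
  have hs0 : (0:ℝ) < s := by exact_mod_cast Nat.lt_of_lt_of_le Nat.zero_lt_one hs
  have hcontF : ContinuousAt (myF s) ((s:ℝ)) := by
    unfold myF
    have h1 : ContinuousAt (fun z : ℝ => (s:ℝ) - z) ((s:ℝ)) := by fun_prop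
    apply ContinuousAt.add h1
    apply ContinuousAt.mul continuousAt_const
    apply tendsto_finset_sum
    intro k _
    apply ContinuousAt.div (by fun_prop) (by fun_prop)
    have hfk : (Nat.factorial k : ℝ) ≠ 0 := Nat.cast_ne_zero.mpr (Nat.factorial_ne_zero k)
    have : ((s:ℝ)) ^ s ≠ 0 := pow_ne_zero _ (ne_of_gt hs0)
    positivity
  have hFs : myF s ((s:ℝ)) = 0 := by
    rw [myF]
    simp
  have hmem : Set.Ioo (0:ℝ) ((s:ℝ)) ∈ nhdsWithin ((s:ℝ)) (Set.Iio ((s:ℝ))) := by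
    apply Ioo_mem_nhdsLT_of_mem
    exact ⟨hs0, le_refl _⟩
  have hF0 : Tendsto (myF s) (nhdsWithin ((s:ℝ)) (Set.Iio ((s:ℝ))))
      (nhdsWithin 0 (Set.Ioi 0)) := by
    apply tendsto_nhdsWithin_of_tendsto_nhds_of_eventually_within
    · have := hcontF.tendsto
      rw [hFs] at this
      exact this.mono_left nhdsWithin_le_nhds
    · filter_upwards [hmem] with z hz
      exact myF_pos s hz.1 hz.2
  have hinv : Tendsto (fun z => (myF s z)⁻¹) (nhdsWithin ((s:ℝ)) (Set.Iio ((s:ℝ)))) atTop :=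
    hF0.inv_tendsto_nhdsGT_zero
  apply hinv.congr'
  filter_upwards [hmem] with z hz
  exact (myQ_eq_inv_myF s hs hz.1 hz.2).symm

/-- The M/M/s expected waiting time `w(x) = (1/μ) Q_s(x/μ)` is continuous and strictly
increasing on `[0, sμ)` and diverges as `x → (sμ)⁻`. -/
theorem stmt_19 (s : ℕ) (hs : 1 ≤ s) (μ : ℝ) (hμ : 0 < μ) :
    letI Q : ℝ → ℝ := fun z =>
      ((∑ k ∈ Finset.range s, z ^ k / (Nat.factorial k : ℝ)) +
          z ^ s / (Nat.factorial s : ℝ) * ((s : ℝ) / ((s : ℝ) - z)))⁻¹ *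
        (z ^ s / (Nat.factorial s : ℝ) * ((s : ℝ) / ((s : ℝ) - z) ^ 2))
    letI w : ℝ → ℝ := fun x => (1 / μ) * Q (x / μ)
    ContinuousOn w (Set.Ico 0 ((s : ℝ) * μ)) ∧
      StrictMonoOn w (Set.Ico 0 ((s : ℝ) * μ)) ∧
      Filter.Tendsto w (nhdsWithin ((s : ℝ) * μ) (Set.Iio ((s : ℝ) * μ)))
        Filter.atTop := by
  show ContinuousOn (fun x => (1 / μ) * myQ s (x / μ)) (Set.Ico 0 ((s : ℝ) * μ)) ∧
      StrictMonoOn (fun x => (1 / μ) * myQ s (x / μ)) (Set.Ico 0 ((s : ℝ) * μ)) ∧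
      Filter.Tendsto (fun x => (1 / μ) * myQ s (x / μ))
        (nhdsWithin ((s : ℝ) * μ) (Set.Iio ((s : ℝ) * μ))) Filter.atTop
  have hmaps : Set.MapsTo (fun x : ℝ => x / μ) (Set.Ico 0 ((s:ℝ) * μ)) (Set.Ico 0 ((s:ℝ))) := by
    rintro x ⟨hx0, hxs⟩
    exact ⟨div_nonneg hx0 hμ.le, (div_lt_iff₀ hμ).mpr hxs⟩
  have hdiv : ContinuousOn (fun x : ℝ => x / μ) (Set.Ico 0 ((s:ℝ) * μ)) :=
    continuousOn_id.div_const μ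
  refine ⟨?_, ?_, ?_⟩
  · exact continuousOn_const.mul ((myQ_cont s hs).comp hdiv hmaps)
  · rintro x₁ hx₁ x₂ hx₂ h12
    have hq := myQ_mono s hs (hmaps hx₁) (hmaps hx₂) (by show x₁ / μ < x₂ / μ; exact div_lt_div_of_pos_right h12 hμ)
    exact mul_lt_mul_of_pos_left hq (by positivity)
  · have h1 : Tendsto (fun x : ℝ => x / μ) (nhdsWithin ((s:ℝ) * μ) (Set.Iio ((s:ℝ) * μ)))
        (nhdsWithin ((s:ℝ)) (Set.Iio ((s:ℝ)))) := by
      apply tendsto_nhdsWithin_of_tendsto_nhds_of_eventually_within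
      · have : Tendsto (fun x : ℝ => x / μ) (nhds ((s:ℝ) * μ)) (nhds ((s:ℝ) * μ / μ)) :=
          (continuous_id.div_const μ).tendsto _
        rw [mul_div_cancel_right₀ _ (ne_of_gt hμ)] at this
        exact this.mono_left nhdsWithin_le_nhds
      · filter_upwards [self_mem_nhdsWithin] with x hx
        exact (div_lt_iff₀ hμ).mpr hx
    have h2 := (myQ_tendsto s hs).comp h1
    exact Tendsto.const_mul_atTop (by positivity) h2
end
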